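/- Let G = (V, E) be a finite simple undirected graph. The minimum, over all feasible solutions x of the pairwise formulation, of the objective ∑_{v ∈ V} 1/(1 + ∑_{u ∈ V, u ≠ v} x_{uv}) equals the chromatic number χ(G) of G. -/

import Mathlib

open Finset

theorem pairwise_aux {V : Type*} [Fintype V] [DecidableEq V] (G : SimpleGraph V)
    (x : V → V → ℝ)
    (hsymm : ∀ u v : V, x u v = x v u)
    (h01 : ∀ u v : V, u ≠ v → x u v = 0 ∨ x u v = 1)
    (hadj : ∀ u v : V, G.Adj u v → x u v = 0)
    (htri : ∀ u v w : V, u ≠ v → v ≠ w → u ≠ w → x u v + x v w - x u w ≤ 1) :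
    ∃ k : ℕ, G.chromaticNumber.toNat ≤ k ∧
      (∑ v : V, 1 / (1 + ∑ u ∈ univ.filter (· ≠ v), x u v)) = (k : ℝ) ∧
      (∀ (n : ℕ) (C : G.Coloring (Fin n)),
        (∀ u v : V, u ≠ v → (x u v = 1 ↔ C u = C v)) → k ≤ n) := by
  classical
  set r : V → V → Prop := fun u v => u = v ∨ (u ≠ v ∧ x u v = 1) with hr
  have hrrefl : ∀ u, r u u := fun u => Or.inl rfl
  have hrsymm : ∀ u v, r u v → r v u := by
    rintro u v (rfl | ⟨h, h1⟩)
    · exact Or.inl rfl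
    · exact Or.inr ⟨h.symm, (hsymm v u).trans h1⟩
  have hrtrans : ∀ u v w, r u v → r v w → r u w := by
    rintro u v w (rfl | ⟨huv, h1⟩) h2
    · exact h2
    rcases h2 with rfl | ⟨hvw, h2⟩
    · exact Or.inr ⟨huv, h1⟩
    by_cases huw : u = w
    · exact Or.inl huw
    refine Or.inr ⟨huw, ?_⟩
    have := htri u v w huv hvw huw
    rcases h01 u w huw with h | h
    · rw [h1, h2, h] at this; linarith
    · exact h
  set c : V → Finset V := fun v => univ.filter (fun u => r u v) with hc
  have hmemc : ∀ u v, u ∈ c v ↔ r u v := by intro u v; simp [hc]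
  have hselfc : ∀ v, v ∈ c v := fun v => (hmemc v v).2 (hrrefl v)
  have hceq : ∀ u v, r u v → c u = c v := by
    intro u v h
    ext w
    simp only [hmemc]
    exact ⟨fun hw => hrtrans w u v hw h, fun hw => hrtrans w v u hw (hrsymm u v h)⟩
  have hceq' : ∀ u v, c u = c v → r u v := by
    intro u v h
    have : u ∈ c v := by rw [← h]; exact hselfc u
    exact (hmemc u v).1 this
  have hcard : ∀ v, (1 + ∑ u ∈ univ.filter (· ≠ v), x u v) = ((c v).card : ℝ) := by
    intro v
    have h1 : ∑ u ∈ univ.filter (· ≠ v), x u v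
        = (((univ.filter (· ≠ v)).filter (fun u => x u v = 1)).card : ℝ) := by
      rw [Finset.card_filter]
      push_cast
      refine Finset.sum_congr rfl fun u hu => ?_
      simp only [mem_filter, mem_univ, true_and] at hu
      rcases h01 u v hu with h | h <;> simp [h]
    have h2 : (univ.filter (· ≠ v)).filter (fun u => x u v = 1) = (c v).erase v := by
      ext u
      simp only [Finset.mem_erase, hmemc, Finset.filter_filter, mem_filter, mem_univ, true_and, hr]
      tauto
    rw [h1, h2, Finset.card_erase_of_mem (hselfc v)]
    have hpos : 1 ≤ (c v).card := Finset.card_pos.2 ⟨v, hselfc v⟩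
    rw [Nat.cast_sub hpos]
    push_cast; ring
  refine ⟨(univ.image c).card, ?_, ?_, ?_⟩
  · -- chromatic number lower bound
    have hcol : G.Colorable (univ.image c).card := by
      have C : G.Coloring ↥(univ.image c) := SimpleGraph.Coloring.mk
        (fun v => (⟨c v, mem_image_of_mem c (mem_univ v)⟩ : ↥(univ.image c))) ?_
      · have h := C.colorable
        rwa [Fintype.card_coe] at h
      intro u v huv h
      have hcuv : c u = c v := congrArg Subtype.val h
      rcases hceq' u v hcuv with rfl | ⟨_, h1⟩
      · exact G.irrefl huv
      · exact absurd (hadj u v huv) (by rw [h1]; norm_num)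
    have := hcol.chromaticNumber_le
    have := ENat.toNat_le_toNat this (by simp)
    simpa using this
  · -- objective value
    calc ∑ v : V, 1 / (1 + ∑ u ∈ univ.filter (· ≠ v), x u v)
        = ∑ v : V, 1 / ((c v).card : ℝ) := by
          refine Finset.sum_congr rfl fun v _ => ?_; rw [hcard v]
      _ = ∑ B ∈ univ.image c, ∑ v ∈ univ.filter (fun v => c v = B), 1 / ((c v).card : ℝ) := by
          rw [Finset.sum_fiberwise_of_maps_to (fun v _ => mem_image_of_mem c (mem_univ v))]
      _ = ∑ B ∈ univ.image c, (1 : ℝ) := by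
          refine Finset.sum_congr rfl fun B hB => ?_
          obtain ⟨v, -, rfl⟩ := Finset.mem_image.1 hB
          have hfil : univ.filter (fun u => c u = c v) = c v := by
            ext u
            simp only [mem_filter, mem_univ, true_and, hmemc]
            exact ⟨hceq' u v, hceq u v⟩
          rw [hfil]
          have hne : ((c v).card : ℝ) ≠ 0 := by
            exact_mod_cast (Finset.card_pos.2 ⟨v, hselfc v⟩).ne'
          rw [Finset.sum_congr rfl (fun u hu => by
            rw [hceq u v ((hmemc u v).1 hu)]), Finset.sum_const, nsmul_eq_mul]
          field_simp
      _ = ((univ.image c).card : ℝ) := by rw [Finset.sum_const, nsmul_eq_mul, mul_one]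
  · -- upper bound via a coloring
    intro n C hC
    have hcv : ∀ v, c v = univ.filter (fun u => C u = C v) := by
      intro v
      ext u
      simp only [hmemc, mem_filter, mem_univ, true_and, hr]
      constructor
      · rintro (rfl | ⟨hne, h1⟩)
        · rfl
        · exact (hC u v hne).1 h1
      · intro h
        by_cases huv : u = v
        · exact Or.inl huv
        · exact Or.inr ⟨huv, (hC u v huv).2 h⟩
    have : univ.image c = Finset.image (fun col => univ.filter (fun u => C u = col)) (univ.image C) := by
      rw [Finset.image_image]
      refine Finset.image_congr fun v _ => (hcv v)
    calc (univ.image c).card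
        = (Finset.image (fun col => univ.filter (fun u => C u = col)) (univ.image C)).card := by rw [this]
      _ ≤ (univ.image C).card := Finset.card_image_le
      _ ≤ Fintype.card (Fin n) := Finset.card_le_univ _
      _ = n := Fintype.card_fin n

/-- The minimum, over all feasible solutions `x` of the pairwise formulation, of the
objective `∑_{v ∈ V} 1/(1 + ∑_{u ≠ v} x u v)` equals the chromatic number of `G`. -/
theorem pairwise_formulation_optimal_value_eq_chromaticNumber
    {V : Type*} [Fintype V] [DecidableEq V] (G : SimpleGraph V) :
    IsLeast
      { s : ℝ | ∃ x : V → V → ℝ,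
          (∀ u v : V, x u v = x v u) ∧
          (∀ u v : V, u ≠ v → x u v = 0 ∨ x u v = 1) ∧
          (∀ u v : V, G.Adj u v → x u v = 0) ∧
          (∀ u v w : V, u ≠ v → v ≠ w → u ≠ w → x u v + x v w - x u w ≤ 1) ∧
          s = ∑ v : V, 1 / (1 + ∑ u ∈ univ.filter (· ≠ v), x u v) }
      (G.chromaticNumber.toNat : ℝ) := by
  classical
  constructor
  · -- membership
    obtain ⟨C⟩ := G.colorable_chromaticNumber_of_fintype
    set n := G.chromaticNumber.toNat with hn
    set x : V → V → ℝ := fun u v => if u ≠ v ∧ C u = C v then 1 else 0 with hx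
    have hsymm : ∀ u v : V, x u v = x v u := by
      intro u v; simp only [hx]
      by_cases h : u = v
      · subst h; rfl
      · by_cases h2 : C u = C v
        · rw [if_pos ⟨h, h2⟩, if_pos ⟨Ne.symm h, h2.symm⟩]
        · rw [if_neg (fun hh => h2 hh.2), if_neg (fun hh => h2 hh.2.symm)]
    have h01 : ∀ u v : V, u ≠ v → x u v = 0 ∨ x u v = 1 := by
      intro u v _; simp only [hx]; split_ifs <;> simp
    have hadj : ∀ u v : V, G.Adj u v → x u v = 0 := by
      intro u v h; simp only [hx]
      have := C.valid h
      simp [this]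
    have htri : ∀ u v w : V, u ≠ v → v ≠ w → u ≠ w → x u v + x v w - x u w ≤ 1 := by
      intro u v w huv hvw huw
      simp only [hx]
      split_ifs with a b c <;> try norm_num
      · exact absurd ⟨huw, a.2.trans b.2⟩ c
    obtain ⟨k, hk1, hk2, hk3⟩ := pairwise_aux G x hsymm h01 hadj htri
    have hkn : k ≤ n := by
      refine hk3 n C fun u v huv => ?_
      simp only [hx]
      constructor
      · intro h
        by_contra hne
        simp [huv, hne] at h
      · intro h; simp [huv, h]
    have hkeq : k = n := le_antisymm hkn hk1
    exact ⟨x, hsymm, h01, hadj, htri, by rw [hk2, hkeq]⟩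
  · -- lower bound
    rintro s ⟨x, hsymm, h01, hadj, htri, rfl⟩
    obtain ⟨k, hk1, hk2, -⟩ := pairwise_aux G x hsymm h01 hadj htri
    rw [hk2]
    exact_mod_cast hk1
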